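/- Let n ≥ 3 be odd and let M be the n×n matrix with M(a,a+1) = M(a+1,a) = 1 for 0 ≤ a ≤ n-2, M(n-1,0) = 2, M(n-1,n-2) = 2 (overriding the previous value in that position), and all other entries 0 (rows and columns indexed 0,…,n-1). Then the characteristic polynomial of M equals that of the circulant matrix with first row (0,1,0,…,0,1); in particular the eigenvalues of M are 2cos(2πj/n) for 0 ≤ j ≤ n-1. -/

import Mathlib

open scoped BigOperators

/-- The McKay matrix of tensoring with the 2-dimensional module for `u_ξ(sl₂)`:
ones on the sub- and super-diagonal, except the last row has 2's in columns `0` and `n-2`. -/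
def McKayM (n : ℕ) : Matrix (Fin n) (Fin n) ℂ := fun a b =>
  if (a : ℕ) = n - 1 then (if (b : ℕ) = 0 ∨ (b : ℕ) = n - 2 then 2 else 0)
  else if (b : ℕ) = (a : ℕ) + 1 ∨ (a : ℕ) = (b : ℕ) + 1 then 1 else 0

/-- The circulant matrix with first row `(0,1,0,…,0,1)`. -/
def CircM (n : ℕ) : Matrix (Fin n) (Fin n) ℂ := fun a b =>
  if ((a : ℕ) + 1) % n = (b : ℕ) ∨ ((b : ℕ) + 1) % n = (a : ℕ) then 1 else 0

open Polynomial

noncomputable def Spoly : ℕ → Polynomial ℂ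
  | 0 => 1
  | 1 => Polynomial.X
  | (k+2) => Polynomial.X * Spoly (k+1) - Spoly k

noncomputable def pathM (k : ℕ) : Matrix (Fin k) (Fin k) (Polynomial ℂ) :=
  fun i j => if (i:ℕ) = (j:ℕ) then Polynomial.X
    else if (i:ℕ) = (j:ℕ)+1 ∨ (j:ℕ) = (i:ℕ)+1 then -1 else 0

lemma coe_succAbove {k : ℕ} (p : Fin (k+1)) (i : Fin k) :
    ((p.succAbove i : Fin (k+1)) : ℕ) = if (i:ℕ) < (p:ℕ) then (i:ℕ) else (i:ℕ)+1 := by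
  rw [Fin.succAbove]
  split_ifs with h h2 h3 <;> simp_all [Fin.lt_def]

lemma det_neg_one_upper {k : ℕ} (A : Matrix (Fin k) (Fin k) (Polynomial ℂ))
    (h : ∀ i j : Fin k, (j:ℕ) < (i:ℕ) → A i j = 0) (hd : ∀ i, A i i = -1) :
    A.det = (-1)^k := by
  rw [Matrix.det_of_upperTriangular (fun i j hij => h i j hij)]
  simp [hd, Finset.prod_const]

lemma det_neg_one_lower {k : ℕ} (A : Matrix (Fin k) (Fin k) (Polynomial ℂ))
    (h : ∀ i j : Fin k, (i:ℕ) < (j:ℕ) → A i j = 0) (hd : ∀ i, A i i = -1) :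
    A.det = (-1)^k := by
  rw [Matrix.det_of_lowerTriangular A (fun i j hij => h i j hij)]
  simp [hd, Finset.prod_const]

lemma pathM_det : ∀ k, (pathM k).det = Spoly k
  | 0 => by simp [pathM, Spoly]
  | 1 => by simp [Matrix.det_fin_one, pathM, Spoly]
  | (k+2) => by
    rw [Matrix.det_succ_row_zero, Fin.sum_univ_succ, Fin.sum_univ_succ]
    have h0 : (pathM (k+2)).submatrix Fin.succ ((0 : Fin (k+2)).succAbove) = pathM (k+1) := by
      ext i j : 1
      simp only [Matrix.submatrix_apply, pathM, coe_succAbove, Fin.val_succ, Fin.val_zero, Nat.not_lt_zero, if_false]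
      first
        | (split_ifs <;> first | rfl | (exfalso; omega) | (exfalso; assumption) | (exfalso; tauto) | (exfalso; casesm* (_ ∨ _), (_ ∧ _) <;> first | assumption | omega) | (exfalso; simp_all) | (exfalso; simp_all; omega))
        | (have hi := i.isLt; have hj := j.isLt; split_ifs <;> first | rfl | (exfalso; omega) | (exfalso; assumption) | (exfalso; tauto) | (exfalso; casesm* (_ ∨ _), (_ ∧ _) <;> first | assumption | omega) | (exfalso; simp_all) | (exfalso; simp_all; omega))
    have h1 : ((pathM (k+2)).submatrix Fin.succ (((0:Fin (k+1)).succ).succAbove)).det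
        = - Spoly k := by
      rw [Matrix.det_succ_column_zero, Fin.sum_univ_succ]
      have hB : ((pathM (k+2)).submatrix Fin.succ (((0:Fin (k+1)).succ).succAbove)).submatrix
          ((0 : Fin (k+1)).succAbove) Fin.succ = pathM k := by
        ext i j : 1
        simp only [Matrix.submatrix_apply, pathM, coe_succAbove, Fin.val_succ, Fin.val_zero, Nat.add_lt_add_iff_right, Nat.not_lt_zero, if_false, Nat.lt_add_one, Nat.zero_lt_succ, if_true,
          Fin.val_one]
        first
        | (split_ifs <;> first | rfl | (exfalso; omega) | (exfalso; assumption) | (exfalso; tauto) | (exfalso; casesm* (_ ∨ _), (_ ∧ _) <;> first | assumption | omega) | (exfalso; simp_all) | (exfalso; simp_all; omega))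
        | (have hi := i.isLt; have hj := j.isLt; split_ifs <;> first | rfl | (exfalso; omega) | (exfalso; assumption) | (exfalso; tauto) | (exfalso; casesm* (_ ∨ _), (_ ∧ _) <;> first | assumption | omega) | (exfalso; simp_all) | (exfalso; simp_all; omega))
      have hB0 : ∀ i : Fin (k+1),
          (pathM (k+2)).submatrix Fin.succ (((0:Fin (k+1)).succ).succAbove) i 0 =
            if (i:ℕ) = 0 then -1 else 0 := by
        intro i
        simp only [Matrix.submatrix_apply, pathM, coe_succAbove, Fin.val_succ, Fin.val_zero, Nat.not_lt_zero, if_false, Nat.lt_add_one, Nat.zero_lt_succ, if_true,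
          Fin.val_one]
        have hi := i.isLt
        split_ifs <;> first | rfl | (exfalso; omega) | (exfalso; assumption) | (exfalso; tauto) | (exfalso; casesm* (_ ∨ _), (_ ∧ _) <;> first | assumption | omega) | (exfalso; simp_all) | (exfalso; simp_all; omega)
      rw [hB]
      have hrest : ∀ i : Fin k,
          (-1:Polynomial ℂ)^((i.succ :ℕ)) *
            ((pathM (k+2)).submatrix Fin.succ (((0:Fin (k+1)).succ).succAbove) i.succ 0) *
            (((pathM (k+2)).submatrix Fin.succ (((0:Fin (k+1)).succ).succAbove)).submatrix
              (i.succ.succAbove) Fin.succ).det = 0 := by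
        intro i
        rw [hB0]
        simp [Fin.val_succ]
      rw [Finset.sum_eq_zero (fun i _ => hrest i), hB0]
      simp [pathM_det k]
    have hrest : ∀ j : Fin k,
        (-1:Polynomial ℂ)^((j.succ.succ : ℕ)) * (pathM (k+2)) 0 j.succ.succ *
          ((pathM (k+2)).submatrix Fin.succ (j.succ.succ.succAbove)).det = 0 := by
      intro j
      have : (pathM (k+2)) 0 j.succ.succ = 0 := by
        simp only [pathM, Fin.val_succ, Fin.val_zero]
        first
        | (split_ifs <;> first | rfl | (exfalso; omega) | (exfalso; assumption) | (exfalso; tauto) | (exfalso; casesm* (_ ∨ _), (_ ∧ _) <;> first | assumption | omega) | (exfalso; simp_all) | (exfalso; simp_all; omega))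
        | (have hi := i.isLt; have hj := j.isLt; split_ifs <;> first | rfl | (exfalso; omega) | (exfalso; assumption) | (exfalso; tauto) | (exfalso; casesm* (_ ∨ _), (_ ∧ _) <;> first | assumption | omega) | (exfalso; simp_all) | (exfalso; simp_all; omega))
      simp [this]
    rw [Finset.sum_eq_zero (fun j _ => hrest j), h0, h1, pathM_det (k+1)]
    have e0 : (pathM (k+2)) 0 0 = Polynomial.X := by simp [pathM]
    have e1 : (pathM (k+2)) 0 1 = -1 := by
      simp only [pathM, Fin.val_zero, Fin.val_one]
      norm_num
    simp only [Fin.succ_zero_eq_one, Fin.val_zero, Fin.val_one, e0, e1, Spoly]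
    ring

noncomputable def EM (n : ℕ) : Matrix (Fin n) (Fin n) (Polynomial ℂ) := fun i j =>
  if (i:ℕ) = n-1 then
    (if (j:ℕ) = n-1 then Polynomial.X else if (j:ℕ) = 0 ∨ (j:ℕ) = n-2 then -2 else 0)
  else if (i:ℕ) = (j:ℕ) then Polynomial.X
  else if (j:ℕ) = (i:ℕ)+1 ∨ (i:ℕ) = (j:ℕ)+1 then -1 else 0

lemma EM_det (m : ℕ) (hm : Odd m) :
    (EM (m+2)).det = Polynomial.X * Spoly (m+1) - 2 * Spoly m - 2 := by
  have hm1 : 1 ≤ m := hm.pos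
  have vm : ((⟨m, by omega⟩ : Fin (m+2)) : ℕ) = m := rfl
  have hm2 : m % 2 = 1 := Nat.odd_iff.mp hm
  rw [Matrix.det_succ_row (EM (m+2)) (Fin.last (m+1))]
  have hsub : ({(0 : Fin (m+2)), ⟨m, by omega⟩, Fin.last (m+1)} : Finset (Fin (m+2)))
      ⊆ Finset.univ := Finset.subset_univ _
  rw [← Finset.sum_subset hsub ?hz]
  case hz =>
    intro x _ hx
    simp only [Finset.mem_insert, Finset.mem_singleton] at hx
    push_neg at hx
    obtain ⟨hx0, hxm, hxl⟩ := hx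
    have h1 : (x:ℕ) ≠ 0 := fun h => hx0 (Fin.ext h)
    have h2 : (x:ℕ) ≠ m := fun h => hxm (Fin.ext h)
    have h3 : (x:ℕ) ≠ m+1 := fun h => hxl (Fin.ext (by simpa [Fin.val_last] using h))
    have hE : EM (m+2) (Fin.last (m+1)) x = 0 := by
      simp only [EM, Fin.val_last]
      split_ifs <;> first | rfl | (exfalso; omega) | (exfalso; assumption) | (exfalso; tauto) | (exfalso; casesm* (_ ∨ _), (_ ∧ _) <;> first | assumption | omega) | (exfalso; simp_all) | (exfalso; simp_all; omega)
    rw [hE]; ring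
  rw [Finset.sum_insert (by
        intro hmem
        simp only [Finset.mem_insert, Finset.mem_singleton] at hmem
        rcases hmem with h | h <;>
          (rw [Fin.ext_iff] at h
           simp only [Fin.val_zero, Fin.val_last, vm] at h; omega)),
      Finset.sum_insert (by
        intro hmem
        simp only [Finset.mem_singleton] at hmem
        rw [Fin.ext_iff] at hmem
        simp only [Fin.val_last, vm] at hmem; omega),
      Finset.sum_singleton]
  -- entries of the last row
  have e0 : EM (m+2) (Fin.last (m+1)) 0 = -2 := by
    simp only [EM, Fin.val_last, Fin.val_zero]
    split_ifs <;> first | rfl | (exfalso; omega) | (exfalso; assumption) | (exfalso; tauto) | (exfalso; casesm* (_ ∨ _), (_ ∧ _) <;> first | assumption | omega) | (exfalso; simp_all) | (exfalso; simp_all; omega)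
  have em : EM (m+2) (Fin.last (m+1)) ⟨m, by omega⟩ = -2 := by
    simp only [EM, Fin.val_last, vm]
    split_ifs <;> first | rfl | (exfalso; omega) | (exfalso; assumption) | (exfalso; tauto) | (exfalso; casesm* (_ ∨ _), (_ ∧ _) <;> first | assumption | omega) | (exfalso; simp_all) | (exfalso; simp_all; omega)
  have el : EM (m+2) (Fin.last (m+1)) (Fin.last (m+1)) = Polynomial.X := by
    simp only [EM, Fin.val_last]
    split_ifs <;> first | rfl | (exfalso; omega) | (exfalso; assumption) | (exfalso; tauto) | (exfalso; casesm* (_ ∨ _), (_ ∧ _) <;> first | assumption | omega) | (exfalso; simp_all) | (exfalso; simp_all; omega)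
  -- minor at the last column : pathM (m+1)
  have hlast : (EM (m+2)).submatrix (Fin.last (m+1)).succAbove
      ((Fin.last (m+1)).succAbove) = pathM (m+1) := by
    ext i j : 1
    simp only [Matrix.submatrix_apply, EM, pathM, coe_succAbove, Fin.val_last]
    have hi := i.isLt; have hj := j.isLt
    split_ifs <;> first | rfl | (exfalso; omega) | (exfalso; assumption) | (exfalso; tauto) | (exfalso; casesm* (_ ∨ _), (_ ∧ _) <;> first | assumption | omega) | (exfalso; simp_all) | (exfalso; simp_all; omega)
  -- minor at column 0 : lower triangular
  have h0 : ((EM (m+2)).submatrix (Fin.last (m+1)).succAbove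
      ((0 : Fin (m+2)).succAbove)).det = (-1)^(m+1) := by
    apply det_neg_one_lower
    · intro i j hij
      simp only [Matrix.submatrix_apply, EM, coe_succAbove, Fin.val_last, Fin.val_zero, Nat.not_lt_zero, if_false]
      have hi := i.isLt; have hj := j.isLt
      split_ifs <;> first | rfl | (exfalso; omega) | (exfalso; assumption) | (exfalso; tauto) | (exfalso; casesm* (_ ∨ _), (_ ∧ _) <;> first | assumption | omega) | (exfalso; simp_all) | (exfalso; simp_all; omega)
    · intro i
      simp only [Matrix.submatrix_apply, EM, coe_succAbove, Fin.val_last, Fin.val_zero, Nat.not_lt_zero, if_false]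
      have hi := i.isLt
      split_ifs <;> first | rfl | (exfalso; omega) | (exfalso; assumption) | (exfalso; tauto) | (exfalso; casesm* (_ ∨ _), (_ ∧ _) <;> first | assumption | omega) | (exfalso; simp_all) | (exfalso; simp_all; omega)
  -- minor at column m
  have hK : ((EM (m+2)).submatrix (Fin.last (m+1)).succAbove
      ((⟨m, by omega⟩ : Fin (m+2)).succAbove)).det = - Spoly m := by
    set K := (EM (m+2)).submatrix (Fin.last (m+1)).succAbove
      ((⟨m, by omega⟩ : Fin (m+2)).succAbove) with hKdef
    rw [Matrix.det_succ_column K (Fin.last m)]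
    have hcol : ∀ i : Fin (m+1), K i (Fin.last m) =
        if (i:ℕ) = m then -1 else 0 := by
      intro i
      simp only [hKdef, Matrix.submatrix_apply, EM, coe_succAbove, Fin.val_last, vm]
      have hi := i.isLt
      split_ifs <;> first | rfl | (exfalso; omega) | (exfalso; assumption) | (exfalso; tauto) | (exfalso; casesm* (_ ∨ _), (_ ∧ _) <;> first | assumption | omega) | (exfalso; simp_all) | (exfalso; simp_all; omega)
    rw [Finset.sum_eq_single (Fin.last m)]
    · have hmm : K.submatrix (Fin.last m).succAbove (Fin.last m).succAbove = pathM m := by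
        ext i j : 1
        simp only [hKdef, Matrix.submatrix_apply, Matrix.submatrix_apply, EM, pathM,
          coe_succAbove, Fin.val_last, vm]
        have hi := i.isLt; have hj := j.isLt
        split_ifs <;> first | rfl | (exfalso; omega) | (exfalso; assumption) | (exfalso; tauto) | (exfalso; casesm* (_ ∨ _), (_ ∧ _) <;> first | assumption | omega) | (exfalso; simp_all) | (exfalso; simp_all; omega)
      rw [hmm, hcol, pathM_det]
      have hpow : ((-1 : Polynomial ℂ))^(m + m) = 1 := Even.neg_one_pow ⟨m, rfl⟩
      simp [Fin.val_last, hpow]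
    · intro b _ hb
      rw [hcol]
      have : (b:ℕ) ≠ m := fun h => hb (Fin.ext (by simpa [Fin.val_last] using h))
      rw [if_neg this]; ring
    · intro h; exact absurd (Finset.mem_univ _) h
  rw [e0, em, el, hlast, h0, hK, pathM_det]
  simp only [Fin.val_last, Fin.val_zero]
  have p1 : ((-1 : Polynomial ℂ))^((m+1) + (m+1)) = 1 :=
    Even.neg_one_pow (by rw [Nat.even_iff]; omega)
  have p2 : ((-1 : Polynomial ℂ))^((m+1) + 0) = 1 :=
    Even.neg_one_pow (by rw [Nat.even_iff]; omega)
  have p3 : ((-1 : Polynomial ℂ))^((m+1) + m) = -1 :=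
    Odd.neg_one_pow (by rw [Nat.odd_iff]; omega)
  have p4 : ((-1 : Polynomial ℂ))^(m+1) = 1 :=
    Even.neg_one_pow (by rw [Nat.even_iff]; omega)
  rw [p1, p2, p3]
  ring

noncomputable def EC (n : ℕ) : Matrix (Fin n) (Fin n) (Polynomial ℂ) := fun i j =>
  if (i:ℕ) = (j:ℕ) then Polynomial.X
  else if (j:ℕ) = (i:ℕ)+1 ∨ (i:ℕ) = (j:ℕ)+1 ∨ ((i:ℕ) = n-1 ∧ (j:ℕ) = 0)
      ∨ ((j:ℕ) = n-1 ∧ (i:ℕ) = 0) then -1 else 0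

set_option maxHeartbeats 1000000 in
lemma EC_det (m : ℕ) (hm : Odd m) :
    (EC (m+2)).det = Polynomial.X * Spoly (m+1) - 2 * Spoly m - 2 := by
  have hm1 : 1 ≤ m := hm.pos
  have vm : ((⟨m, by omega⟩ : Fin (m+2)) : ℕ) = m := rfl
  have hm2 : m % 2 = 1 := Nat.odd_iff.mp hm
  rw [Matrix.det_succ_row (EC (m+2)) (Fin.last (m+1))]
  have hsub : ({(0 : Fin (m+2)), ⟨m, by omega⟩, Fin.last (m+1)} : Finset (Fin (m+2)))
      ⊆ Finset.univ := Finset.subset_univ _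
  rw [← Finset.sum_subset hsub ?hz]
  case hz =>
    intro x _ hx
    simp only [Finset.mem_insert, Finset.mem_singleton] at hx
    push_neg at hx
    obtain ⟨hx0, hxm, hxl⟩ := hx
    have h1 : (x:ℕ) ≠ 0 := fun h => hx0 (Fin.ext h)
    have h2 : (x:ℕ) ≠ m := fun h => hxm (Fin.ext h)
    have h3 : (x:ℕ) ≠ m+1 := fun h => hxl (Fin.ext (by simpa [Fin.val_last] using h))
    have hE : EC (m+2) (Fin.last (m+1)) x = 0 := by
      simp only [EC, Fin.val_last]
      have hxlt := x.isLt
      split_ifs <;> first | rfl | (exfalso; omega) | (exfalso; assumption) | (exfalso; tauto) | (exfalso; casesm* (_ ∨ _), (_ ∧ _) <;> first | assumption | omega) | (exfalso; simp_all) | (exfalso; simp_all; omega)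
    rw [hE]; ring
  rw [Finset.sum_insert (by
        intro hmem
        simp only [Finset.mem_insert, Finset.mem_singleton] at hmem
        rcases hmem with h | h <;>
          (rw [Fin.ext_iff] at h
           simp only [Fin.val_zero, Fin.val_last, vm] at h; omega)),
      Finset.sum_insert (by
        intro hmem
        simp only [Finset.mem_singleton] at hmem
        rw [Fin.ext_iff] at hmem
        simp only [Fin.val_last, vm] at hmem; omega),
      Finset.sum_singleton]
  -- entries of the last row
  have e0 : EC (m+2) (Fin.last (m+1)) 0 = -1 := by
    simp only [EC, Fin.val_last, Fin.val_zero]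
    split_ifs <;> first | rfl | (exfalso; omega) | (exfalso; assumption) | (exfalso; tauto) | (exfalso; casesm* (_ ∨ _), (_ ∧ _) <;> first | assumption | omega) | (exfalso; simp_all) | (exfalso; simp_all; omega)
  have em : EC (m+2) (Fin.last (m+1)) ⟨m, by omega⟩ = -1 := by
    simp only [EC, Fin.val_last, vm]
    split_ifs <;> first | rfl | (exfalso; omega) | (exfalso; assumption) | (exfalso; tauto) | (exfalso; casesm* (_ ∨ _), (_ ∧ _) <;> first | assumption | omega) | (exfalso; simp_all) | (exfalso; simp_all; omega)
  have el : EC (m+2) (Fin.last (m+1)) (Fin.last (m+1)) = Polynomial.X := by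
    simp only [EC, Fin.val_last]
    split_ifs <;> first | rfl | (exfalso; omega) | (exfalso; assumption) | (exfalso; tauto) | (exfalso; casesm* (_ ∨ _), (_ ∧ _) <;> first | assumption | omega) | (exfalso; simp_all) | (exfalso; simp_all; omega)
  -- minor at the last column : pathM (m+1)
  have hlast : (EC (m+2)).submatrix (Fin.last (m+1)).succAbove
      ((Fin.last (m+1)).succAbove) = pathM (m+1) := by
    ext i j : 1
    simp only [Matrix.submatrix_apply, EC, pathM, coe_succAbove, Fin.val_last]
    have hi := i.isLt; have hj := j.isLt
    split_ifs <;> first | rfl | (exfalso; omega) | (exfalso; assumption) | (exfalso; tauto) | (exfalso; casesm* (_ ∨ _), (_ ∧ _) <;> first | assumption | omega) | (exfalso; simp_all) | (exfalso; simp_all; omega)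
  -- minor at column 0
  have hK0 : ((EC (m+2)).submatrix (Fin.last (m+1)).succAbove
      ((0 : Fin (m+2)).succAbove)).det = 1 + Spoly m := by
    set K := (EC (m+2)).submatrix (Fin.last (m+1)).succAbove ((0 : Fin (m+2)).succAbove)
      with hKdef
    rw [Matrix.det_succ_row_zero K]
    have hrow : ∀ j : Fin (m+1), K 0 j =
        if (j:ℕ) = 0 ∨ (j:ℕ) = m then -1 else 0 := by
      intro j
      simp only [hKdef, Matrix.submatrix_apply, EC, coe_succAbove, Fin.val_last, Fin.val_zero, Nat.not_lt_zero, if_false, Nat.lt_add_one, Nat.zero_lt_succ, if_true]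
      have hj := j.isLt
      split_ifs <;> first | rfl | (exfalso; omega) | (exfalso; assumption) | (exfalso; tauto) | (exfalso; casesm* (_ ∨ _), (_ ∧ _) <;> first | assumption | omega) | (exfalso; simp_all) | (exfalso; simp_all; omega)
    have hsub2 : ({(0 : Fin (m+1)), Fin.last m} : Finset (Fin (m+1)))
        ⊆ Finset.univ := Finset.subset_univ _
    rw [← Finset.sum_subset hsub2 ?hz2]
    case hz2 =>
      intro x _ hx
      simp only [Finset.mem_insert, Finset.mem_singleton] at hx
      push_neg at hx
      obtain ⟨hx0, hxl⟩ := hx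
      have h1 : (x:ℕ) ≠ 0 := fun h => hx0 (Fin.ext h)
      have h2 : (x:ℕ) ≠ m := fun h => hxl (Fin.ext (by simpa [Fin.val_last] using h))
      rw [hrow, if_neg (by tauto)]; ring
    rw [Finset.sum_pair (by
        intro h; rw [Fin.ext_iff] at h
        simp only [Fin.val_zero, Fin.val_last] at h; omega)]
    -- inner minor at j = 0 : lower triangular
    have hL : (K.submatrix Fin.succ ((0 : Fin (m+1)).succAbove)).det = (-1)^m := by
      apply det_neg_one_lower
      · intro i j hij
        have hij' : (i:ℕ) < (j:ℕ) := hij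
        simp only [hKdef, Matrix.submatrix_apply, EC, coe_succAbove, Fin.val_last,
          Fin.val_zero, Nat.not_lt_zero, if_false, Fin.val_succ]
        have hi := i.isLt; have hj := j.isLt
        split_ifs <;> first | rfl | (exfalso; omega) | (exfalso; assumption) | (exfalso; tauto) | (exfalso; casesm* (_ ∨ _), (_ ∧ _) <;> first | assumption | omega) | (exfalso; simp_all) | (exfalso; simp_all; omega)
      · intro i
        simp only [hKdef, Matrix.submatrix_apply, EC, coe_succAbove, Fin.val_last,
          Fin.val_zero, Nat.not_lt_zero, if_false, Fin.val_succ]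
        have hi := i.isLt
        split_ifs <;> first | rfl | (exfalso; omega) | (exfalso; assumption) | (exfalso; tauto) | (exfalso; casesm* (_ ∨ _), (_ ∧ _) <;> first | assumption | omega) | (exfalso; simp_all) | (exfalso; simp_all; omega)
    -- inner minor at j = last : pathM m
    have hP : K.submatrix Fin.succ ((Fin.last m).succAbove) = pathM m := by
      ext i j : 1
      simp only [hKdef, Matrix.submatrix_apply, EC, pathM, coe_succAbove, Fin.val_last,
        Fin.val_zero, Fin.val_succ]
      have hi := i.isLt; have hj := j.isLt
      split_ifs <;> first | rfl | (exfalso; omega) | (exfalso; assumption) | (exfalso; tauto) | (exfalso; casesm* (_ ∨ _), (_ ∧ _) <;> first | assumption | omega) | (exfalso; simp_all) | (exfalso; simp_all; omega)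
    rw [hP, hL, pathM_det, hrow, hrow]
    simp only [Fin.val_zero, Fin.val_last]
    have q1 : ((-1 : Polynomial ℂ))^(m : ℕ) = -1 :=
      Odd.neg_one_pow (by rw [Nat.odd_iff]; omega)
    rw [if_pos (Or.inl trivial), if_pos (Or.inr trivial), pow_zero, q1]
    ring
  -- minor at column m
  have hK2 : ((EC (m+2)).submatrix (Fin.last (m+1)).succAbove
      ((⟨m, by omega⟩ : Fin (m+2)).succAbove)).det = -1 - Spoly m := by
    set K := (EC (m+2)).submatrix (Fin.last (m+1)).succAbove
      ((⟨m, by omega⟩ : Fin (m+2)).succAbove) with hKdef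
    rw [Matrix.det_succ_column K (Fin.last m)]
    have hcol : ∀ i : Fin (m+1), K i (Fin.last m) =
        if (i:ℕ) = 0 ∨ (i:ℕ) = m then -1 else 0 := by
      intro i
      simp only [hKdef, Matrix.submatrix_apply, EC, coe_succAbove, Fin.val_last, vm]
      have hi := i.isLt
      split_ifs <;> first | rfl | (exfalso; omega) | (exfalso; assumption) | (exfalso; tauto) | (exfalso; casesm* (_ ∨ _), (_ ∧ _) <;> first | assumption | omega) | (exfalso; simp_all) | (exfalso; simp_all; omega)
    have hsub2 : ({(0 : Fin (m+1)), Fin.last m} : Finset (Fin (m+1)))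
        ⊆ Finset.univ := Finset.subset_univ _
    rw [← Finset.sum_subset hsub2 ?hz3]
    case hz3 =>
      intro x _ hx
      simp only [Finset.mem_insert, Finset.mem_singleton] at hx
      push_neg at hx
      obtain ⟨hx0, hxl⟩ := hx
      have h1 : (x:ℕ) ≠ 0 := fun h => hx0 (Fin.ext h)
      have h2 : (x:ℕ) ≠ m := fun h => hxl (Fin.ext (by simpa [Fin.val_last] using h))
      rw [hcol, if_neg (by tauto)]; ring
    rw [Finset.sum_pair (by
        intro h; rw [Fin.ext_iff] at h
        simp only [Fin.val_zero, Fin.val_last] at h; omega)]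
    -- inner minor at i = 0 : upper triangular
    have hU : (K.submatrix ((0 : Fin (m+1)).succAbove) ((Fin.last m).succAbove)).det
        = (-1)^m := by
      apply det_neg_one_upper
      · intro i j hij
        have hij' : (j:ℕ) < (i:ℕ) := hij
        simp only [hKdef, Matrix.submatrix_apply, EC, coe_succAbove, Fin.val_last,
          Fin.val_zero, Nat.not_lt_zero, if_false, Fin.val_succ, vm]
        have hi := i.isLt; have hj := j.isLt
        split_ifs <;> first | rfl | (exfalso; omega) | (exfalso; assumption) | (exfalso; tauto) | (exfalso; casesm* (_ ∨ _), (_ ∧ _) <;> first | assumption | omega) | (exfalso; simp_all) | (exfalso; simp_all; omega)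
      · intro i
        simp only [hKdef, Matrix.submatrix_apply, EC, coe_succAbove, Fin.val_last,
          Fin.val_zero, Nat.not_lt_zero, if_false, Fin.val_succ, vm]
        have hi := i.isLt
        split_ifs <;> first | rfl | (exfalso; omega) | (exfalso; assumption) | (exfalso; tauto) | (exfalso; casesm* (_ ∨ _), (_ ∧ _) <;> first | assumption | omega) | (exfalso; simp_all) | (exfalso; simp_all; omega)
    -- inner minor at i = last : pathM m
    have hP : K.submatrix ((Fin.last m).succAbove) ((Fin.last m).succAbove) = pathM m := by
      ext i j : 1
      simp only [hKdef, Matrix.submatrix_apply, EC, pathM, coe_succAbove, Fin.val_last,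
        Fin.val_zero, vm]
      have hi := i.isLt; have hj := j.isLt
      split_ifs <;> first | rfl | (exfalso; omega) | (exfalso; assumption) | (exfalso; tauto) | (exfalso; casesm* (_ ∨ _), (_ ∧ _) <;> first | assumption | omega) | (exfalso; simp_all) | (exfalso; simp_all; omega)
    rw [hP, hU, pathM_det, hcol, hcol]
    simp only [Fin.val_zero, Fin.val_last]
    have q0 : ((-1 : Polynomial ℂ))^(0 + m : ℕ) = -1 :=
      Odd.neg_one_pow (by rw [Nat.odd_iff]; omega)
    have q2 : ((-1 : Polynomial ℂ))^(m + m : ℕ) = 1 :=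
      Even.neg_one_pow ⟨m, rfl⟩
    have q1 : ((-1 : Polynomial ℂ))^(m : ℕ) = -1 :=
      Odd.neg_one_pow (by rw [Nat.odd_iff]; omega)
    rw [if_pos (Or.inl trivial), if_pos (Or.inr trivial), q0, q2, q1]
    ring
  rw [e0, em, el, hlast, hK0, hK2, pathM_det]
  simp only [Fin.val_last, Fin.val_zero]
  have p1 : ((-1 : Polynomial ℂ))^((m+1) + (m+1)) = 1 :=
    Even.neg_one_pow (by rw [Nat.even_iff]; omega)
  have p2 : ((-1 : Polynomial ℂ))^((m+1) + 0) = 1 :=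
    Even.neg_one_pow (by rw [Nat.even_iff]; omega)
  have p3 : ((-1 : Polynomial ℂ))^((m+1) + m) = -1 :=
    Odd.neg_one_pow (by rw [Nat.odd_iff]; omega)
  rw [p1, p2, p3]
  ring

lemma charmatrix_McKay (n : ℕ) (hn : 3 ≤ n) : (McKayM n).charmatrix = EM n := by
  funext i j
  rcases eq_or_ne i j with rfl | hij
  · rw [Matrix.charmatrix_apply_eq]
    have hi := i.isLt
    have hMc : McKayM n i i = 0 := by
      simp only [McKayM]
      split_ifs <;> first | rfl | (exfalso; omega) | (exfalso; tauto) | (exfalso; casesm* (_ ∨ _), (_ ∧ _) <;> first | assumption | omega) | (exfalso; simp_all) | (exfalso; simp_all; omega)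
    have hE : EM n i i = Polynomial.X := by
      simp only [EM]
      split_ifs <;> first | rfl | (exfalso; omega) | (exfalso; tauto) | (exfalso; casesm* (_ ∨ _), (_ ∧ _) <;> first | assumption | omega) | (exfalso; simp_all) | (exfalso; simp_all; omega)
    rw [hMc, hE, map_zero, sub_zero]
  · rw [Matrix.charmatrix_apply_ne _ _ _ hij]
    have hv : (i:ℕ) ≠ (j:ℕ) := fun h => hij (Fin.ext h)
    have hi := i.isLt; have hj := j.isLt
    simp only [EM, McKayM]
    split_ifs <;>
      first
        | (exfalso; omega)
        | (exfalso; tauto)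
        | (exfalso; casesm* (_ ∨ _), (_ ∧ _) <;> first | assumption | omega)
        | (simp; done)
        | (simp [map_ofNat]; done)
        | norm_num

lemma mod_succ_eq (n a : ℕ) (h : a < n) :
    (a+1) % n = if a = n-1 then 0 else a+1 := by
  split_ifs with hh
  · subst hh
    have : n - 1 + 1 = n := by omega
    rw [this, Nat.mod_self]
  · exact Nat.mod_eq_of_lt (by omega)

lemma charmatrix_Circ (n : ℕ) (hn : 3 ≤ n) : (CircM n).charmatrix = EC n := by
  funext i j
  have hi := i.isLt; have hj := j.isLt
  rcases eq_or_ne i j with rfl | hij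
  · rw [Matrix.charmatrix_apply_eq]
    have hMc : CircM n i i = 0 := by
      simp only [CircM, mod_succ_eq n (i:ℕ) hi]
      split_ifs <;> first | rfl | (exfalso; omega) | (exfalso; tauto) | (exfalso; casesm* (_ ∨ _), (_ ∧ _) <;> first | assumption | omega) | (exfalso; simp_all) | (exfalso; simp_all; omega)
    have hE : EC n i i = Polynomial.X := by
      simp only [EC]
      split_ifs <;> first | rfl | (exfalso; omega) | (exfalso; tauto) | (exfalso; casesm* (_ ∨ _), (_ ∧ _) <;> first | assumption | omega) | (exfalso; simp_all) | (exfalso; simp_all; omega)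
    rw [hMc, hE, map_zero, sub_zero]
  · rw [Matrix.charmatrix_apply_ne _ _ _ hij]
    have hv : (i:ℕ) ≠ (j:ℕ) := fun h => hij (Fin.ext h)
    simp only [EC, CircM, mod_succ_eq n (i:ℕ) hi, mod_succ_eq n (j:ℕ) hj]
    split_ifs <;>
      first
        | (exfalso; omega)
        | (exfalso; tauto)
        | (exfalso; casesm* (_ ∨ _), (_ ∧ _) <;> first | assumption | omega)
        | (simp; done)
        | (simp [map_ofNat]; done)
        | norm_num

lemma Spoly_eval_two : ∀ k : ℕ, (Spoly k).eval 2 = (k+1 : ℂ)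
  | 0 => by simp [Spoly]
  | 1 => by simp [Spoly]; norm_num
  | (k+2) => by
    rw [Spoly]
    simp only [Polynomial.eval_sub, Polynomial.eval_mul, Polynomial.eval_X,
      Spoly_eval_two (k+1), Spoly_eval_two k]
    push_cast
    ring

lemma Spoly_eval_cos : ∀ (k : ℕ) (θ : ℂ),
    (Spoly k).eval (2 * Complex.cos θ) * Complex.sin θ = Complex.sin ((k+1 : ℕ) * θ)
  | 0, θ => by simp [Spoly]
  | 1, θ => by
    simp only [Spoly, Polynomial.eval_X]
    have : ((1+1 : ℕ) : ℂ) * θ = 2 * θ := by push_cast; ring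
    rw [this, Complex.sin_two_mul]
    ring
  | (k+2), θ => by
    have h1 := Spoly_eval_cos (k+1) θ
    have h0 := Spoly_eval_cos k θ
    rw [Spoly]
    simp only [Polynomial.eval_sub, Polynomial.eval_mul, Polynomial.eval_X]
    have e3 : ((k+2+1 : ℕ) : ℂ) * θ = ((k+1+1 : ℕ) : ℂ) * θ + θ := by push_cast; ring
    have e1 : ((k+1 : ℕ) : ℂ) * θ = ((k+1+1 : ℕ) : ℂ) * θ - θ := by push_cast; ring
    rw [e1, Complex.sin_sub] at h0
    rw [e3, Complex.sin_add]
    linear_combination (2 * Complex.cos θ) * h1 - h0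

theorem mckay_charpoly_eq_circulant (n : ℕ) (hn : 3 ≤ n) (hodd : Odd n) :
    (McKayM n).charpoly = (CircM n).charpoly ∧
      ∀ j : Fin n, (McKayM n).charpoly.IsRoot
        ((2 * Real.cos (2 * Real.pi * (j : ℕ) / n) : ℝ) : ℂ) := by
  obtain ⟨m, rfl⟩ : ∃ m, n = m + 2 := ⟨n - 2, by omega⟩
  have hm : Odd m := by rcases hodd with ⟨t, ht⟩; exact ⟨t - 1, by omega⟩
  have hm2 : m % 2 = 1 := Nat.odd_iff.mp hm
  have hM : (McKayM (m+2)).charpoly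
      = Polynomial.X * Spoly (m+1) - 2 * Spoly m - 2 := by
    have hdef : (McKayM (m+2)).charpoly = ((McKayM (m+2)).charmatrix).det := rfl
    rw [hdef, charmatrix_McKay _ (by omega), EM_det m hm]
  have hC : (CircM (m+2)).charpoly
      = Polynomial.X * Spoly (m+1) - 2 * Spoly m - 2 := by
    have hdef : (CircM (m+2)).charpoly = ((CircM (m+2)).charmatrix).det := rfl
    rw [hdef, charmatrix_Circ _ (by omega), EC_det m hm]
  refine ⟨by rw [hM, hC], ?_⟩
  intro j
  have hjlt := j.isLt
  rw [Polynomial.IsRoot.def, hM]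
  by_cases hj0 : (j:ℕ) = 0
  · have hroot : ((2 * Real.cos (2 * Real.pi * (j:ℕ) / ((m+2:ℕ):ℝ)) : ℝ) : ℂ) = 2 := by
      rw [hj0]
      push_cast
      norm_num
    rw [hroot]
    simp only [Polynomial.eval_sub, Polynomial.eval_mul, Polynomial.eval_X,
      Polynomial.eval_ofNat, Spoly_eval_two]
    push_cast
    ring
  · set θr : ℝ := 2 * Real.pi * (j:ℕ) / ((m+2:ℕ):ℝ) with hθr
    have hroot : ((2 * Real.cos θr : ℝ) : ℂ) = 2 * Complex.cos ((θr : ℝ) : ℂ) := by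
      push_cast [Complex.ofReal_cos]
      ring
    rw [hroot]
    have hm2ne : ((m:ℝ)+2) ≠ 0 := by positivity
    have hNθ : ((m+2 : ℕ) : ℝ) * θr = ((2*(j:ℕ) : ℕ) : ℝ) * Real.pi := by
      rw [hθr]; push_cast; field_simp
    have hsinN : Real.sin (((m+2:ℕ):ℝ) * θr) = 0 := by
      rw [hNθ]; exact Real.sin_nat_mul_pi _
    have hM1θ : ((m+1 : ℕ) : ℝ) * θr = ((j:ℕ):ℝ) * (2 * Real.pi) - θr := by
      rw [hθr]; push_cast; field_simp; ring
    have hsinM1 : Real.sin (((m+1:ℕ):ℝ) * θr) = - Real.sin θr := by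
      rw [hM1θ]; exact Real.sin_nat_mul_two_pi_sub θr _
    have hsinne : Real.sin θr ≠ 0 := by
      intro h
      rcases Real.sin_eq_zero_iff.mp h with ⟨k, hk⟩
      have hπ : Real.pi ≠ 0 := Real.pi_ne_zero
      have hkey : (k:ℝ) * ((m:ℝ)+2) = 2 * (j:ℕ) := by
        have h2 : (k:ℝ) * Real.pi * ((m:ℝ)+2) = 2 * Real.pi * (j:ℕ) := by
          rw [hk, hθr]; field_simp; norm_num
        have h3 : ((k:ℝ) * ((m:ℝ)+2)) * Real.pi = (2 * ((j:ℕ):ℝ)) * Real.pi := by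
          ring_nf; ring_nf at h2; linarith
        exact mul_right_cancel₀ hπ h3
      have hint : k * ((m:ℤ)+2) = 2 * ((j:ℕ):ℤ) := by exact_mod_cast hkey
      have hjpos : (0:ℤ) < ((j:ℕ):ℤ) := by exact_mod_cast Nat.pos_of_ne_zero hj0
      have hjub : ((j:ℕ):ℤ) < (m:ℤ)+2 := by exact_mod_cast hjlt
      have hkpos : 0 < k := by
        by_contra hneg
        push_neg at hneg
        have : k * ((m:ℤ)+2) ≤ 0 :=
          mul_nonpos_iff.mpr (Or.inr ⟨hneg, by positivity⟩)
        linarith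
      have hk2 : k < 2 := by
        by_contra hge
        push_neg at hge
        have : 2 * ((m:ℤ)+2) ≤ k * ((m:ℤ)+2) :=
          mul_le_mul_of_nonneg_right hge (by positivity)
        linarith
      have hk1 : k = 1 := by omega
      rw [hk1, one_mul] at hint
      have : m + 2 = 2 * (j:ℕ) := by exact_mod_cast hint
      omega
    have hSne : Complex.sin ((θr:ℝ):ℂ) ≠ 0 := by
      rw [← Complex.ofReal_sin]
      exact Complex.ofReal_ne_zero.mpr hsinne
    have h1 := Spoly_eval_cos (m+1) ((θr:ℝ):ℂ)
    have h0 := Spoly_eval_cos m ((θr:ℝ):ℂ)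
    have hsinNC : Complex.sin (((m+1+1:ℕ):ℂ) * ((θr:ℝ):ℂ)) = 0 := by
      have harg : (((m+1+1:ℕ):ℂ) * ((θr:ℝ):ℂ)) = ((((m+2:ℕ):ℝ) * θr : ℝ) : ℂ) := by
        push_cast; ring
      rw [harg, ← Complex.ofReal_sin, hsinN, Complex.ofReal_zero]
    have hsinM1C : Complex.sin (((m+1:ℕ):ℂ) * ((θr:ℝ):ℂ)) = - Complex.sin ((θr:ℝ):ℂ) := by
      have harg : (((m+1:ℕ):ℂ) * ((θr:ℝ):ℂ)) = ((((m+1:ℕ):ℝ) * θr : ℝ) : ℂ) := by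
        push_cast; ring
      rw [harg, ← Complex.ofReal_sin, hsinM1]
      push_cast
      ring
    simp only [Polynomial.eval_sub, Polynomial.eval_mul, Polynomial.eval_X,
      Polynomial.eval_ofNat]
    have hmul : ((2 * Complex.cos ((θr:ℝ):ℂ)) * ((Spoly (m+1)).eval (2 * Complex.cos ((θr:ℝ):ℂ)))
        - 2 * ((Spoly m).eval (2 * Complex.cos ((θr:ℝ):ℂ))) - 2) * Complex.sin ((θr:ℝ):ℂ) = 0 := by
      linear_combination (2 * Complex.cos ((θr:ℝ):ℂ)) * h1 - 2 * h0
        + (2 * Complex.cos ((θr:ℝ):ℂ)) * hsinNC - 2 * hsinM1C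
    exact (mul_eq_zero.mp hmul).resolve_right hSne
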